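/- If σ(x) = x + α for some α ∈ k \ {0}, then σ has finite order, and its order is divisible by p. -/

import Mathlib

theorem stmt11 (k K : Type*) [Field k] [Field K] [Algebra k K]
    (p : ℕ) (hp : 0 < p) [CharP k p]
    (x : K) (hx : Transcendental k x)
    [FiniteDimensional ↥(IntermediateField.adjoin k ({x} : Set K)) K]
    (σ : K ≃ₐ[k] K) (α : k) (hα : α ≠ 0)
    (hσx : σ x = x + algebraMap k K α) :
    IsOfFinOrder σ ∧ p ∣ orderOf σ := by
  have hK : CharP K p := charP_of_injective_algebraMap (algebraMap k K).injective p
  set c : K := algebraMap k K α with hc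
  have hc0 : c ≠ 0 := by
    simp [hc, hα]
  -- σ^n x = x + n • c
  have key : ∀ n : ℕ, (σ ^ n) x = x + n • c := by
    intro n
    induction n with
    | zero => simp
    | succ n ih =>
      rw [pow_succ, AlgEquiv.mul_apply, hσx, map_add, ih]
      have : (σ ^ n) c = c := by
        rw [hc, AlgEquiv.commutes]
      rw [this, succ_nsmul]
      ring
  -- σ^p fixes x
  have hpx : (σ ^ p) x = x := by
    rw [key p]
    have : (p : ℕ) • c = 0 := by
      rw [nsmul_eq_mul, CharP.cast_eq_zero K p, zero_mul]
    rw [this, add_zero]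
  set F := IntermediateField.adjoin k ({x} : Set K) with hF
  -- σ^p fixes F pointwise
  have hfix : ∀ y ∈ F, (σ ^ p) y = y := by
    have hle : F ≤ IntermediateField.fixedField (Subgroup.zpowers (σ ^ p)) := by
      rw [hF, IntermediateField.adjoin_le_iff]
      intro y hy
      rcases hy with rfl
      intro g
      rcases g with ⟨g, hg⟩
      rcases hg with ⟨n, rfl⟩
      show ((σ ^ p) ^ n) y = y
      induction n using Int.induction_on with
      | zero => simp
      | succ m ih =>
        rw [zpow_add_one, AlgEquiv.mul_apply, hpx, ih]
      | pred m ih =>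
        have hinv : ((σ ^ p)⁻¹ : K ≃ₐ[k] K) y = y := by
          have h2 := congrArg (⇑((σ ^ p)⁻¹ : K ≃ₐ[k] K)) hpx
          rw [show ((σ ^ p)⁻¹ : K ≃ₐ[k] K) ((σ ^ p) y) = y from
            (σ ^ p).symm_apply_apply y] at h2
          exact h2.symm
        rw [zpow_sub_one, AlgEquiv.mul_apply, hinv, ih]
    intro y hy
    exact hle hy ⟨σ ^ p, Subgroup.mem_zpowers _⟩
  -- build the F-algebra automorphism
  let τ : K ≃ₐ[F] K := AlgEquiv.ofRingEquiv (f := (σ ^ p : K ≃ₐ[k] K).toRingEquiv)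
    (fun f => hfix f.1 f.2)
  have hτn : ∀ n : ℕ, ∀ y : K, ((σ ^ p) ^ n) y = (τ ^ n) y := by
    intro n
    induction n with
    | zero => intro y; simp
    | succ n ih =>
      intro y
      rw [pow_succ, pow_succ, AlgEquiv.mul_apply, AlgEquiv.mul_apply, ih]
      rfl
  have hτ : IsOfFinOrder τ := isOfFinOrder_of_finite τ
  obtain ⟨n, hn, hτ1⟩ := isOfFinOrder_iff_pow_eq_one.mp hτ
  have hσpn : σ ^ (p * n) = 1 := by
    rw [pow_mul]
    ext y
    rw [hτn n y, hτ1]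
    rfl
  have hfin : IsOfFinOrder σ :=
    isOfFinOrder_iff_pow_eq_one.mpr ⟨p * n, Nat.mul_pos hp hn, hσpn⟩
  refine ⟨hfin, ?_⟩
  have hord : σ ^ orderOf σ = 1 := pow_orderOf_eq_one σ
  have := key (orderOf σ)
  rw [hord] at this
  simp only [AlgEquiv.one_apply] at this
  have h0 : (orderOf σ : ℕ) • c = 0 := by linear_combination -this
  rw [nsmul_eq_mul] at h0
  have : ((orderOf σ : ℕ) : K) = 0 := by
    rcases mul_eq_zero.mp h0 with h | h
    · exact h
    · exact absurd h hc0
  exact (CharP.cast_eq_zero_iff K p _).mp this
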